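/- Fix an integer k ≥ 2. Consider bootstrap percolation on Q_{k,n} where each vertex is initially infected independently with probability p = 1/2 − n^{−k/2}, and let the infection threshold be r = ⌈N/2⌉ + C(3k, 2k), where N = Σ_{i=1}^k C(n,i) and C(3k,2k) is a binomial coefficient. Then there exists an absolute constant δ > 0 such that for all sufficiently large n and every vertex x ∈ V(Q_{k,n}), P(x ∈ A_{1,r}) ≥ 1/2 + δ. -/

import Mathlib

open Finset Filter
open scoped Classical

noncomputable section

/-- The infected set after `i` steps of `r`-neighbour bootstrap percolation on the graph `G`,
starting from the initial infected set `A0`: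
`A_{i+1} = A_i ∪ {v : |N(v) ∩ A_i| ≥ r}`. -/
def bootSets {V : Type*} [Fintype V] [DecidableEq V] (G : SimpleGraph V) (r : ℕ)
    (A0 : Finset V) : ℕ → Finset V
  | 0 => A0
  | i + 1 =>
      bootSets G r A0 i ∪
        Finset.univ.filter fun v => r ≤ (G.neighborFinset v ∩ bootSets G r A0 i).card

/-- `A0` percolates under the `r`-neighbour bootstrap process on `G`. -/
def percolates {V : Type*} [Fintype V] [DecidableEq V] (G : SimpleGraph V) (r : ℕ)
    (A0 : Finset V) : Prop :=
  ∃ i, bootSets G r A0 i = Finset.univ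

/-- The probability that the initial infected set is exactly `A`, when every vertex is
infected independently with probability `p`. -/
def configProb {V : Type*} [Fintype V] [DecidableEq V] (p : ℝ) (A : Finset V) : ℝ :=
  p ^ A.card * (1 - p) ^ (Fintype.card V - A.card)

/-- The probability of the event `E` about the initial infected set, when every vertex is
infected independently with probability `p`. -/
def probEvent {V : Type*} [Fintype V] [DecidableEq V] (p : ℝ) (E : Finset V → Prop) : ℝ :=
  ∑ A : Finset V, if E A then configProb p A else 0

/-- The generalized hypercube `Q_{k,n}`: vertices are `{0,1}^n`, two vertices being adjacent
iff their Hamming distance is between `1` and `k`.  The usual hypercube `Q_n` is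
`cubeGraph n 1`. -/
def cubeGraph (n k : ℕ) : SimpleGraph (Fin n → Bool) where
  Adj x y := 1 ≤ hammingDist x y ∧ hammingDist x y ≤ k
  symm := by
    refine ⟨fun x y h => ?_⟩
    show 1 ≤ hammingDist y x ∧ hammingDist y x ≤ k
    rwa [hammingDist_comm]
  loopless := by
    refine ⟨fun x h => ?_⟩
    simp [hammingDist_self] at h

/-- The critical probability for `r`-neighbour bootstrap percolation on `Q_{k,n}` where every
vertex is initially infected independently with probability `p`:
the supremum of all `p ∈ (0,1)` for which percolation has probability at most `1/2`. -/
def critProb (n k r : ℕ) : ℝ :=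
  sSup {p : ℝ | p ∈ Set.Ioo (0 : ℝ) 1 ∧
    probEvent p (fun A0 => percolates (cubeGraph n k) r A0) ≤ 1 / 2}

/-- The `Boot1(t)` process with base threshold `r`: at step `1` the threshold is `r - t`,
afterwards it is `r`. -/
def boot1Sets {V : Type*} [Fintype V] [DecidableEq V] (G : SimpleGraph V) (r t : ℕ)
    (A0 : Finset V) : ℕ → Finset V
  | 0 => A0
  | 1 => A0 ∪ Finset.univ.filter fun v => r - t ≤ (G.neighborFinset v ∩ A0).card
  | i + 2 =>
      boot1Sets G r t A0 (i + 1) ∪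
        Finset.univ.filter fun v =>
          r ≤ (G.neighborFinset v ∩ boot1Sets G r t A0 (i + 1)).card

/-- The `Boot2(t)` (= `Boot3(t)`) process with base threshold `r`: at step `1` the threshold
is `r - 2t`, at step `2` it is `r - t`, and afterwards it is `r`. -/
def boot2Sets {V : Type*} [Fintype V] [DecidableEq V] (G : SimpleGraph V) (r t : ℕ)
    (A0 : Finset V) : ℕ → Finset V
  | 0 => A0
  | 1 => A0 ∪ Finset.univ.filter fun v => r - 2 * t ≤ (G.neighborFinset v ∩ A0).card
  | 2 =>
      boot2Sets G r t A0 1 ∪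
        Finset.univ.filter fun v =>
          r - t ≤ (G.neighborFinset v ∩ boot2Sets G r t A0 1).card
  | i + 3 =>
      boot2Sets G r t A0 (i + 2) ∪
        Finset.univ.filter fun v =>
          r ≤ (G.neighborFinset v ∩ boot2Sets G r t A0 (i + 2)).card



section Helpers


lemma cb_sq : ∀ m : ℕ, 1 ≤ m → 16 ^ m ≤ 4 * m * (Nat.centralBinom m) ^ 2 := by
  intro m hm
  induction m with
  | zero => omega
  | succ m ih =>
    rcases Nat.eq_or_lt_of_le hm with h | h
    · simp [← h, Nat.centralBinom]
    · have hm1 : 1 ≤ m := by omega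
      have H := ih hm1
      have key := Nat.succ_mul_centralBinom_succ m
      have hpos : 0 < m + 1 := by omega
      have goal2 : (m + 1) * (16 ^ (m + 1)) ≤ (m + 1) * (4 * (m + 1) * Nat.centralBinom (m+1) ^ 2) := by
        have e : (m + 1) * (4 * (m + 1) * Nat.centralBinom (m+1) ^ 2)
            = 4 * ((m + 1) * Nat.centralBinom (m+1)) ^ 2 := by ring
        rw [e, key]
        have e2 : 4 * (2 * (2 * m + 1) * Nat.centralBinom m) ^ 2
            = 16 * ((2*m+1)^2 * Nat.centralBinom m ^ 2) := by ring
        rw [e2]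
        calc (m + 1) * 16 ^ (m + 1) = 16 * ((m+1) * 16 ^ m) := by ring
          _ ≤ 16 * ((m+1) * (4 * m * Nat.centralBinom m ^ 2)) := by
              exact Nat.mul_le_mul_left _ (Nat.mul_le_mul_left _ H)
          _ ≤ 16 * ((2*m+1)^2 * Nat.centralBinom m ^ 2) := by
              apply Nat.mul_le_mul_left
              have : (m+1) * (4 * m) ≤ (2*m+1)^2 := by nlinarith
              calc (m+1) * (4 * m * Nat.centralBinom m ^ 2)
                  = ((m+1) * (4*m)) * Nat.centralBinom m ^ 2 := by ring
                _ ≤ (2*m+1)^2 * Nat.centralBinom m ^ 2 := Nat.mul_le_mul_right _ this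
      exact Nat.le_of_mul_le_mul_left goal2 hpos

lemma central_ge (M : ℕ) (h2 : 2 ≤ M) : 4 ^ M ≤ 16 * M * (M.choose ((M+1)/2)) ^ 2 := by
  rcases Nat.even_or_odd M with ⟨m, hm⟩ | ⟨m, hm⟩
  · subst hm
    have hm1 : 1 ≤ m := by omega
    have e : (m + m + 1)/2 = m := by omega
    rw [e]
    have hc : (m+m).choose m = Nat.centralBinom m := by
      rw [Nat.centralBinom]; congr 1; omega
    rw [hc]
    calc 4 ^ (m+m) = 16 ^ m := by rw [show m + m = 2*m by ring, pow_mul]; norm_num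
      _ ≤ 4 * m * Nat.centralBinom m ^ 2 := cb_sq m hm1
      _ ≤ 16 * (m+m) * Nat.centralBinom m ^ 2 := by
          apply Nat.mul_le_mul_right; omega
  · subst hm
    have hm1 : 1 ≤ m := by omega
    have e : (2*m + 1 + 1)/2 = m + 1 := by omega
    rw [e]
    have hc : Nat.centralBinom m ≤ (2*m+1).choose (m+1) := by
      have := Nat.choose_succ_succ (2*m) m
      rw [this, Nat.centralBinom]
      exact Nat.le_add_right _ _
    calc 4 ^ (2*m+1) = 4 * 16 ^ m := by rw [pow_succ, pow_mul]; ring_nf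
      _ ≤ 4 * (4 * m * Nat.centralBinom m ^ 2) := Nat.mul_le_mul_left _ (cb_sq m hm1)
      _ = 16 * m * Nat.centralBinom m ^ 2 := by ring
      _ ≤ 16 * (2*m+1) * ((2*m+1).choose (m+1)) ^ 2 := by
          apply Nat.mul_le_mul
          · apply Nat.mul_le_mul_left; omega
          · exact Nat.pow_le_pow_left hc 2

lemma choose_ratio (M c : ℕ) : ∀ s : ℕ, c + s ≤ M →
    M.choose c * (M - c - s + 1) ^ s ≤ M.choose (c + s) * (c + s) ^ s := by
  intro s
  induction s with
  | zero => simp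
  | succ s ih =>
    intro h
    have h1 : c + s ≤ M := by omega
    have key := Nat.choose_succ_right_eq M (c + s)
    have e1 : M - c - (s+1) + 1 = M - c - s := by omega
    rw [e1]
    calc M.choose c * (M - c - s) ^ (s+1)
        = (M.choose c * (M - c - s) ^ s) * (M - c - s) := by ring
      _ ≤ (M.choose c * (M - c - s + 1) ^ s) * (M - c - s) := by
          apply Nat.mul_le_mul_right
          exact Nat.mul_le_mul_left _ (Nat.pow_le_pow_left (by omega) s)
      _ ≤ (M.choose (c+s) * (c+s) ^ s) * (M - c - s) := Nat.mul_le_mul_right _ (ih h1)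
      _ = (M.choose (c+s) * (M - (c+s))) * (c+s) ^ s := by
          rw [show M - (c+s) = M - c - s by omega]; ring
      _ = (M.choose (c+s+1) * (c+s+1)) * (c+s) ^ s := by rw [key]
      _ ≤ (M.choose (c+s+1) * (c+s+1)) * (c+s+1) ^ s := by
          exact Nat.mul_le_mul_left _ (Nat.pow_le_pow_left (by omega) s)
      _ = M.choose (c+s+1) * (c+s+1) ^ (s+1) := by ring

lemma choose_anti_step (M j : ℕ) (hj : (M+1)/2 ≤ j) : M.choose (j+1) ≤ M.choose j := by
  rcases Nat.lt_or_ge M (j+1) with h | h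
  · rw [Nat.choose_eq_zero_of_lt h]; exact Nat.zero_le _
  · have e1 : M.choose (j+1) = M.choose (M - (j+1)) := (Nat.choose_symm h).symm
    have e2 : M.choose j = M.choose (M - j) := (Nat.choose_symm (by omega)).symm
    rw [e1, e2]
    have e3 : M - j = (M - (j+1)) + 1 := by omega
    rw [e3]
    exact Nat.choose_le_succ_of_lt_half_left (by omega)

lemma choose_anti (M j j' : ℕ) (hj : (M+1)/2 ≤ j) (hjj : j ≤ j') :
    M.choose j' ≤ M.choose j := by
  induction j' with
  | zero => have : j = 0 := by omega
            simp [this]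
  | succ j' ih =>
    rcases Nat.eq_or_lt_of_le hjj with h | h
    · rw [h]
    · have hjj' : j ≤ j' := by omega
      exact le_trans (choose_anti_step M j' (by omega)) (ih hjj')

lemma ceil_half (N : ℕ) : ⌈(N:ℝ)/2⌉₊ = (N+1)/2 := by
  rcases Nat.even_or_odd N with ⟨m, hm⟩ | ⟨m, hm⟩
  · subst hm
    have e : ((m + m : ℕ) : ℝ)/2 = (m : ℝ) := by push_cast; ring
    rw [e, Nat.ceil_natCast]; omega
  · subst hm
    have e : ((2*m + 1 : ℕ) : ℝ)/2 = (m : ℝ) + 1/2 := by push_cast; ring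
    rw [e]
    have : ⌈(m : ℝ) + 1/2⌉₊ = m + 1 := by
      rw [Nat.ceil_eq_iff (by omega)]
      constructor
      · push_cast; linarith
      · push_cast; linarith
    rw [this]; omega

lemma hamming_eq_filter (n : ℕ) (x y : Fin n → Bool) :
    hammingDist x y = (univ.filter fun j => x j ≠ y j).card := rfl

lemma sphere_card (n : ℕ) (x : Fin n → Bool) (i : ℕ) :
    (univ.filter fun y => hammingDist x y = i).card = n.choose i := by
  have e : n.choose i = (Finset.powersetCard i (univ : Finset (Fin n))).card := by
    rw [Finset.card_powersetCard, card_univ, Fintype.card_fin]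
  rw [e]
  apply Finset.card_nbij' (fun y => univ.filter fun j => x j ≠ y j)
      (fun s => fun j => if j ∈ s then !(x j) else x j)
  · intro y hy
    simp only [mem_coe, mem_filter, mem_univ, true_and] at hy
    rw [mem_coe, Finset.mem_powersetCard_univ, ← hamming_eq_filter]
    exact hy
  · intro s hs
    rw [mem_coe, Finset.mem_powersetCard_univ] at hs
    simp only [mem_coe, mem_filter, mem_univ, true_and]
    rw [hamming_eq_filter, ← hs]
    congr 1
    ext j
    by_cases hj : j ∈ s <;> simp [hj]
  · intro y hy
    funext j
    beta_reduce
    by_cases hj : x j ≠ y j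
    · rw [if_pos (by simpa using hj)]
      revert hj; cases x j <;> cases y j <;> simp
    · rw [if_neg (by simpa using hj)]
      push_neg at hj; exact hj
  · intro s hs
    ext j
    simp only [mem_filter, mem_univ, true_and]
    by_cases hj : j ∈ s <;> simp [hj]

lemma degree_eq (n k : ℕ) (x : Fin n → Bool) :
    ((cubeGraph n k).neighborFinset x).card = ∑ i ∈ Icc 1 k, n.choose i := by
  have e : (cubeGraph n k).neighborFinset x
      = univ.filter (fun y => 1 ≤ hammingDist x y ∧ hammingDist x y ≤ k) := by
    ext y
    rw [mem_filter, SimpleGraph.mem_neighborFinset]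
    simp [cubeGraph]
  rw [e]
  rw [Finset.card_eq_sum_card_fiberwise (f := fun y => hammingDist x y) (t := Icc 1 k)
    (by intro y hy; simp only [mem_coe, mem_filter] at hy; rw [mem_coe, mem_Icc]; exact hy.2)]
  apply Finset.sum_congr rfl
  intro i hi
  rw [← sphere_card n x i]
  congr 1
  ext y
  simp only [mem_filter, mem_univ, true_and, mem_Icc] at hi ⊢
  constructor
  · rintro ⟨_, h⟩; exact h
  · intro h; exact ⟨by omega, h⟩

lemma one_sub_ge_exp (x : ℝ) (h0 : 0 ≤ x) (h : x ≤ 1/2) : Real.exp (-(2*x)) ≤ 1 - x := by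
  have h1 : 1 + 2*x ≤ Real.exp (2*x) := by
    have := Real.add_one_le_exp (2*x); linarith
  have h2 : (0:ℝ) < 1 + 2*x := by linarith
  rw [Real.exp_neg]
  have h3 : (Real.exp (2*x))⁻¹ ≤ (1+2*x)⁻¹ := by
    apply inv_anti₀ h2 h1
  refine le_trans h3 ?_
  rw [inv_eq_one_div, div_le_iff₀ h2]
  nlinarith

lemma pow_one_sub_ge (x : ℝ) (m : ℕ) (h0 : 0 ≤ x) (h : x ≤ 1/2) :
    Real.exp (-(2*x*m)) ≤ (1 - x)^m := by
  have hb := one_sub_ge_exp x h0 h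
  calc Real.exp (-(2*x*m)) = Real.exp (-(2*x))^m := by
        rw [← Real.exp_nat_mul]; congr 1; ring
    _ ≤ (1-x)^m := pow_le_pow_left₀ (Real.exp_pos _).le hb m

set_option maxHeartbeats 1000000 in
lemma term_lb (M c s J : ℕ) (ε a b : ℝ)
    (hc1 : M ≤ 2*c) (hc2 : 2*c ≤ M + 1) (hJ : J = c + s) (hs1 : 1 ≤ s)
    (hsM : 16*s*(s+1) ≤ M) (hJM : J ≤ M)
    (hε0 : 0 ≤ ε) (hε : ε ≤ 1/8)
    (ha0 : 0 ≤ a) (hb0 : 0 ≤ b)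
    (ha : ε^2 * M ≤ a) (hb : ε * (2*s+1) ≤ b) :
    (1/2) * (M.choose c : ℝ) * (1/2)^M * Real.exp (-(8*a) - 4*b)
      ≤ (M.choose J : ℝ) * (1/2 - ε)^J * (1/2 + ε)^(M-J) := by
  have hM1 : 1 ≤ M := by omega
  -- Part 1: choose bound : (1/2) * choose c ≤ choose J
  have hcs : c + s ≤ M := by omega
  have hchooseN := choose_ratio M c s hcs
  have hD0 : 0 < c + s := by omega
  have hA : ((M - c - s + 1 : ℕ) : ℝ) = (M:ℝ) - c - s + 1 := by
    have : M - c - s + 1 = M + 1 - (c + s) := by omega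
    rw [this]
    push_cast [Nat.cast_sub (by omega : c + s ≤ M + 1)]
    ring
  have hMpos : (0:ℝ) < M := by exact_mod_cast hM1
  have hDpos : (0:ℝ) < (c:ℝ) + s := by
    have : (0:ℝ) < ((c + s : ℕ) : ℝ) := by exact_mod_cast hD0
    push_cast at this; linarith
  have c1 : (M:ℝ) ≤ 2*c := by exact_mod_cast hc1
  have c2 : (2*(c:ℝ)) ≤ M + 1 := by exact_mod_cast hc2
  have c3 : (16*(s:ℝ)*((s:ℝ)+1)) ≤ M := by exact_mod_cast hsM
  have c4 : (1:ℝ) ≤ s := by exact_mod_cast hs1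
  have cM0 : (0:ℝ) ≤ M := hMpos.le
  have cs0 : (0:ℝ) ≤ s := by linarith
  have cc0 : (0:ℝ) ≤ c := by nlinarith
  have hfrac1 : (8*(s:ℝ)+8)/M ≤ 1 := by
    rw [div_le_one hMpos]; nlinarith
  have hratio : (1:ℝ) - (8*s+8)/M ≤ ((M:ℝ) - c - s + 1) / ((c:ℝ) + s) := by
    have e : (1:ℝ) - (8*(s:ℝ)+8)/M = ((M:ℝ) - (8*s+8))/M := by field_simp
    rw [e, div_le_div_iff₀ hMpos hDpos]
    have h1 : (M:ℝ)*(2*c) ≤ (M:ℝ)*(M+1) := mul_le_mul_of_nonneg_left c2 cM0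
    have h2 : (s:ℝ)*(M:ℝ) ≤ (s:ℝ)*(2*c) := mul_le_mul_of_nonneg_left c1 cs0
    nlinarith
  have hhalf : (1/2 : ℝ) ≤ (((M:ℝ) - c - s + 1)/((c:ℝ)+s))^s := by
    have hB : (-2:ℝ) ≤ -((8*(s:ℝ)+8)/M) := by linarith
    have hbern := one_add_mul_le_pow hB s
    have h1 : (1:ℝ) + (s:ℝ) * -((8*(s:ℝ)+8)/M) = 1 - (s:ℝ)*(8*s+8)/M := by ring
    have h2 : (s:ℝ)*(8*(s:ℝ)+8)/M ≤ 1/2 := by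
      rw [div_le_iff₀ hMpos]; nlinarith
    have h3 : (1:ℝ) + -((8*(s:ℝ)+8)/M) = 1 - (8*s+8)/M := by ring
    have h4 : (0:ℝ) ≤ 1 - (8*(s:ℝ)+8)/M := by linarith
    calc (1/2:ℝ) ≤ 1 - (s:ℝ)*(8*s+8)/M := by linarith
      _ = 1 + (s:ℝ) * -((8*(s:ℝ)+8)/M) := by ring
      _ ≤ (1 + -((8*(s:ℝ)+8)/M))^s := hbern
      _ = (1 - (8*(s:ℝ)+8)/M)^s := by rw [h3]
      _ ≤ (((M:ℝ) - c - s + 1)/((c:ℝ)+s))^s := pow_le_pow_left₀ h4 hratio s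
  have hApos : (0:ℝ) ≤ (M:ℝ) - c - s + 1 := by
    have : ((c+s:ℕ):ℝ) ≤ M := by exact_mod_cast hcs
    push_cast at this; linarith
  have hchoose : (1/2:ℝ) * (M.choose c : ℝ) ≤ (M.choose J : ℝ) := by
    have hcast : (M.choose c : ℝ) * ((M:ℝ) - c - s + 1)^s
        ≤ (M.choose (c+s) : ℝ) * ((c:ℝ)+s)^s := by
      have := hchooseN
      have hc' : ((M.choose c * (M - c - s + 1) ^ s : ℕ) : ℝ)
          ≤ ((M.choose (c + s) * (c + s) ^ s : ℕ) : ℝ) := by exact_mod_cast this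
      push_cast at hc'
      have hA2 : ((M - c - s : ℕ) : ℝ) = (M:ℝ) - c - s := by
        have e : M - c - s = M - (c + s) := by omega
        rw [e, Nat.cast_sub hcs]
        push_cast; ring
      rw [hA2] at hc'
      exact hc'
    have hDp : (0:ℝ) < ((c:ℝ)+s)^s := by positivity
    rw [← mul_le_mul_iff_of_pos_right hDp]
    calc (1/2:ℝ) * (M.choose c : ℝ) * ((c:ℝ)+s)^s
        ≤ ((((M:ℝ) - c - s + 1)/((c:ℝ)+s))^s) * (M.choose c : ℝ) * ((c:ℝ)+s)^s := by
          apply mul_le_mul_of_nonneg_right _ hDp.le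
          exact mul_le_mul_of_nonneg_right hhalf (Nat.cast_nonneg _)
      _ = (M.choose c : ℝ) * (((M:ℝ) - c - s + 1)^s / ((c:ℝ)+s)^s * ((c:ℝ)+s)^s) := by
          rw [div_pow]; ring
      _ = (M.choose c : ℝ) * ((M:ℝ) - c - s + 1)^s := by
          rw [div_mul_cancel₀ _ (ne_of_gt hDp)]
      _ ≤ (M.choose (c+s) : ℝ) * ((c:ℝ)+s)^s := hcast
      _ = (M.choose J : ℝ) * ((c:ℝ)+s)^s := by rw [hJ]
  -- Part 2 : the p^J q^(M-J) bound
  set u := M - J with hu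
  set v := J - u with hv
  have huv : u + v = J := by omega
  have hvs : v ≤ 2*s + 1 := by omega
  have huM : u ≤ M := by omega
  have hsplit : (1/2 - ε)^J * (1/2 + ε)^u
      = (1/2:ℝ)^M * ((1-4*ε^2)^u * (1-2*ε)^v) := by
    have e1 : (1/2 - ε : ℝ) = (1/2)*(1-2*ε) := by ring
    have e2 : (1/2 + ε : ℝ) = (1/2)*(1+2*ε) := by ring
    rw [e1, e2, mul_pow, mul_pow]
    have e3 : (1-2*ε:ℝ)^J = (1-2*ε)^u * (1-2*ε)^v := by
      rw [← pow_add, huv]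
    have e4 : (1/2:ℝ)^J * (1/2:ℝ)^u = (1/2:ℝ)^M := by
      rw [← pow_add]; congr 1; omega
    have e5 : (1-2*ε:ℝ)^u * (1+2*ε)^u = (1-4*ε^2)^u := by
      rw [← mul_pow]; congr 1; ring
    calc (1/2:ℝ)^J * (1-2*ε)^J * ((1/2:ℝ)^u * (1+2*ε)^u)
        = ((1/2:ℝ)^J * (1/2:ℝ)^u) * (((1-2*ε)^u * (1+2*ε)^u) * (1-2*ε)^v) := by
          rw [e3]; ring
      _ = (1/2:ℝ)^M * ((1-4*ε^2)^u * (1-2*ε)^v) := by rw [e4, e5]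
  have hx1 : (0:ℝ) ≤ 4*ε^2 := by positivity
  have hx2 : 4*ε^2 ≤ 1/2 := by nlinarith
  have hy1 : (0:ℝ) ≤ 2*ε := by linarith
  have hy2 : 2*ε ≤ 1/2 := by linarith
  have hbound1 : Real.exp (-(8*a)) ≤ (1-4*ε^2)^u := by
    refine le_trans ?_ (pow_one_sub_ge (4*ε^2) u hx1 hx2)
    apply Real.exp_le_exp.mpr
    have huu : ε^2 * u ≤ a := by
      refine le_trans ?_ ha
      apply mul_le_mul_of_nonneg_left _ (sq_nonneg ε)
      exact_mod_cast huM
    nlinarith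
  have hbound2 : Real.exp (-(4*b)) ≤ (1-2*ε)^v := by
    refine le_trans ?_ (pow_one_sub_ge (2*ε) v hy1 hy2)
    apply Real.exp_le_exp.mpr
    have hvv : ε * v ≤ b := by
      refine le_trans ?_ hb
      apply mul_le_mul_of_nonneg_left _ hε0
      have : (v:ℝ) ≤ 2*(s:ℝ)+1 := by exact_mod_cast hvs
      linarith
    nlinarith
  have hprod : Real.exp (-(8*a) - 4*b) ≤ (1-4*ε^2)^u * (1-2*ε)^v := by
    rw [show -(8*a) - 4*b = -(8*a) + -(4*b) by ring, Real.exp_add]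
    exact mul_le_mul hbound1 hbound2 (Real.exp_pos _).le
      (le_trans (Real.exp_pos _).le hbound1)
  have hhalfM : (0:ℝ) ≤ (1/2:ℝ)^M := by positivity
  calc (1/2) * (M.choose c : ℝ) * (1/2:ℝ)^M * Real.exp (-(8*a) - 4*b)
      = (1/2 * (M.choose c : ℝ)) * ((1/2:ℝ)^M * Real.exp (-(8*a) - 4*b)) := by ring
    _ ≤ (M.choose J : ℝ) * ((1/2:ℝ)^M * ((1-4*ε^2)^u * (1-2*ε)^v)) := by
        apply mul_le_mul hchoose (mul_le_mul_of_nonneg_left hprod hhalfM)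
          (by positivity) (Nat.cast_nonneg _)
    _ = (M.choose J : ℝ) * ((1/2 - ε)^J * (1/2 + ε)^u) := by rw [← hsplit]
    _ = (M.choose J : ℝ) * (1/2 - ε)^J * (1/2 + ε)^u := by ring

lemma L_lb (M : ℕ) : M ≤ 64 * (Nat.sqrt M / 8 + 1)^2 := by
  set a := Nat.sqrt M with ha
  have h1 : M < (a+1) * (a+1) := Nat.lt_succ_sqrt M
  have h2 : a + 1 ≤ 8 * (a/8 + 1) := by omega
  have h3 : (a+1)*(a+1) ≤ (8*(a/8+1)) * (8*(a/8+1)) := Nat.mul_le_mul h2 h2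
  calc M ≤ (a+1)*(a+1) := by omega
    _ ≤ (8*(a/8+1)) * (8*(a/8+1)) := h3
    _ = 64 * (a/8+1)^2 := by ring

lemma X_lb (M c L : ℕ) (hM2 : 2 ≤ M) (hc : c = (M+1)/2) (hL : M ≤ 64 * L^2) :
    (1/32 : ℝ) ≤ (L:ℝ) * (M.choose c : ℝ) * (1/2)^M := by
  have hMpos : (0:ℝ) < M := by exact_mod_cast (by omega : 0 < M)
  have A1 : (4:ℝ)^M ≤ 16 * M * (M.choose c : ℝ)^2 := by
    rw [hc]; exact_mod_cast central_ge M hM2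
  have A2 : (M:ℝ) ≤ 64 * (L:ℝ)^2 := by exact_mod_cast hL
  set X := (L:ℝ) * (M.choose c : ℝ) * (1/2)^M with hX
  have hX0 : 0 ≤ X := by positivity
  have hfour : (1/4:ℝ)^M * 4^M = 1 := by
    rw [← mul_pow]; norm_num
  have epow : ((1/2:ℝ)^M)^2 = (1/4:ℝ)^M := by
    rw [← pow_mul, show M*2 = 2*M by ring, pow_mul]
    norm_num
  have hC2 : (1:ℝ) ≤ 16 * M * (M.choose c : ℝ)^2 * (1/4)^M := by
    calc (1:ℝ) = (1/4:ℝ)^M * 4^M := hfour.symm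
      _ ≤ (1/4:ℝ)^M * (16 * M * (M.choose c : ℝ)^2) := by
          apply mul_le_mul_of_nonneg_left A1 (by positivity)
      _ = 16 * M * (M.choose c : ℝ)^2 * (1/4)^M := by ring
  have h5 : 1/(16*(M:ℝ)) ≤ (M.choose c : ℝ)^2 * (1/4)^M := by
    rw [div_le_iff₀ (by positivity)]
    nlinarith
  have h6 : (M:ℝ)/64 ≤ (L:ℝ)^2 := by linarith
  have hX2 : 1/1024 ≤ X^2 := by
    have e : X^2 = (L:ℝ)^2 * ((M.choose c : ℝ)^2 * (1/4:ℝ)^M) := by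
      rw [hX]
      rw [mul_pow, mul_pow, epow]
      ring
    have hmul : (M:ℝ)/64 * (1/(16*(M:ℝ)))
        ≤ (L:ℝ)^2 * ((M.choose c : ℝ)^2 * (1/4:ℝ)^M) :=
      mul_le_mul h6 h5 (by positivity) (by positivity)
    have e2 : (M:ℝ)/64 * (1/(16*(M:ℝ))) = 1/1024 := by
      field_simp
      ring
    rw [e]
    rw [e2] at hmul
    exact hmul
  nlinarith

variable {V : Type*} [Fintype V] [DecidableEq V]

lemma binom_powerset_sum {α : Type*} [DecidableEq α] (p q : ℝ) (s : Finset α) :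
    ∑ B ∈ s.powerset, p ^ B.card * q ^ (s.card - B.card) = (p + q) ^ s.card := by
  calc ∑ B ∈ s.powerset, p ^ B.card * q ^ (s.card - B.card)
      = ∑ B ∈ s.powerset, (∏ _x ∈ B, p) * ∏ _x ∈ s \ B, q := by
        apply Finset.sum_congr rfl
        intro B hB
        rw [Finset.prod_const, Finset.prod_const, card_sdiff_of_subset (mem_powerset.mp hB)]
    _ = ∏ _x ∈ s, (p + q) := (Finset.prod_add _ _ _).symm
    _ = (p + q) ^ s.card := Finset.prod_const _

lemma split_sum (T : Finset V) (f : Finset V → ℝ) :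
    ∑ A : Finset V, f A = ∑ B ∈ T.powerset, ∑ C ∈ (univ \ T).powerset, f (B ∪ C) := by
  have e2 : ∑ BC ∈ T.powerset ×ˢ (univ \ T : Finset V).powerset, f (BC.1 ∪ BC.2)
      = ∑ B ∈ T.powerset, ∑ C ∈ (univ \ T).powerset, f (B ∪ C) :=
    Finset.sum_product _ _ (fun BC => f (BC.1 ∪ BC.2))
  rw [← e2]
  apply Finset.sum_nbij' (fun A => (A ∩ T, A \ T)) (fun BC => BC.1 ∪ BC.2)
  · intro A _
    rw [Finset.mem_product]
    constructor
    · exact mem_powerset.mpr (inter_subset_right)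
    · exact mem_powerset.mpr (by intro a ha; exact Finset.mem_sdiff.mpr ⟨mem_univ a, (Finset.mem_sdiff.mp ha).2⟩)
  · intro BC _; exact mem_univ _
  · intro A _
    simp only
    ext a
    simp only [mem_union, mem_inter, Finset.mem_sdiff]
    tauto
  · intro BC hBC
    rw [Finset.mem_product, mem_powerset, mem_powerset] at hBC
    obtain ⟨h1, h2⟩ := hBC
    have h2' : ∀ a ∈ BC.2, a ∉ T := by
      intro a ha; exact (mem_sdiff.mp (h2 ha)).2
    ext1 <;> simp only
    · ext a
      simp only [mem_inter, mem_union]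
      constructor
      · rintro ⟨h | h, hT⟩
        · exact h
        · exact absurd hT (h2' a h)
      · intro h; exact ⟨Or.inl h, h1 h⟩
    · ext a
      simp only [Finset.mem_sdiff, mem_union]
      constructor
      · rintro ⟨h | h, hT⟩
        · exact absurd (h1 h) hT
        · exact h
      · intro h; exact ⟨Or.inr h, h2' a h⟩
  · intro A _
    congr 1
    ext a
    simp only [mem_union, mem_inter, Finset.mem_sdiff]
    tauto

lemma local_prob (p : ℝ) (T : Finset V) (G : Finset V → Prop) :
    probEvent p (fun A => G (A ∩ T))
      = ∑ B ∈ T.powerset, if G B then p ^ B.card * (1 - p) ^ (T.card - B.card) else 0 := by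
  set q := 1 - p with hq
  unfold probEvent
  rw [split_sum T]
  have hle : T.card ≤ Fintype.card V := by
    rw [← card_univ]; exact card_le_card (subset_univ T)
  have hcard : Fintype.card V = T.card + (univ \ T : Finset V).card := by
    rw [card_sdiff_of_subset (subset_univ T), card_univ]
    omega
  apply Finset.sum_congr rfl
  intro B hB
  rw [mem_powerset] at hB
  have hBcard : B.card ≤ T.card := card_le_card hB
  have step : ∀ C ∈ (univ \ T : Finset V).powerset,
      (if G ((B ∪ C) ∩ T) then configProb p (B ∪ C) else 0)
        = (if G B then p ^ B.card * q ^ (T.card - B.card) else 0)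
            * (p ^ C.card * q ^ ((univ \ T : Finset V).card - C.card)) := by
    intro C hC
    rw [mem_powerset] at hC
    have hCT : ∀ a ∈ C, a ∉ T := fun a ha => (mem_sdiff.mp (hC ha)).2
    have hBC : Disjoint B C := by
      rw [Finset.disjoint_left]
      intro a haB haC
      exact hCT a haC (hB haB)
    have hint : (B ∪ C) ∩ T = B := by
      ext a
      simp only [mem_inter, mem_union]
      constructor
      · rintro ⟨h | h, hT⟩
        · exact h
        · exact absurd hT (hCT a h)
      · intro h; exact ⟨Or.inl h, hB h⟩
    rw [hint]
    by_cases hG : G B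
    · rw [if_pos hG, if_pos hG]
      unfold configProb
      rw [card_union_of_disjoint hBC]
      rw [← hq]
      have hCcard : C.card ≤ (univ \ T : Finset V).card := card_le_card hC
      have e : Fintype.card V - (B.card + C.card)
          = (T.card - B.card) + ((univ \ T : Finset V).card - C.card) := by omega
      rw [e, pow_add, pow_add]
      ring
    · rw [if_neg hG, if_neg hG, zero_mul]
  rw [Finset.sum_congr rfl step, ← Finset.mul_sum]
  have : ∑ C ∈ (univ \ T : Finset V).powerset,
      p ^ C.card * q ^ ((univ \ T : Finset V).card - C.card) = 1 := by
    rw [binom_powerset_sum]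
    rw [hq]
    norm_num
  rw [this, mul_one]

/-- The binomial tail sum. -/
def binTail (p : ℝ) (M r : ℕ) : ℝ :=
  ∑ j ∈ Finset.range (M + 1), if r ≤ j then (M.choose j : ℝ) * p ^ j * (1 - p) ^ (M - j) else 0

lemma powerset_tail_eq (p : ℝ) (S : Finset V) (r : ℕ) :
    ∑ B ∈ S.powerset, (if r ≤ B.card then p ^ B.card * (1 - p) ^ (S.card - B.card) else 0)
      = binTail p S.card r := by
  rw [Finset.sum_powerset, binTail]
  apply Finset.sum_congr rfl
  intro j hj
  rw [Finset.mem_range] at hj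
  have : ∀ B ∈ Finset.powersetCard j S,
      (if r ≤ B.card then p ^ B.card * (1 - p) ^ (S.card - B.card) else 0)
        = (if r ≤ j then p ^ j * (1 - p) ^ (S.card - j) else 0) := by
    intro B hB
    rw [Finset.mem_powersetCard] at hB
    rw [hB.2]
  rw [Finset.sum_congr rfl this, Finset.sum_const, Finset.card_powersetCard]
  rw [nsmul_eq_mul]
  by_cases h : r ≤ j
  · rw [if_pos h, if_pos h]; ring
  · rw [if_neg h, if_neg h, mul_zero]

lemma vertex_prob (p : ℝ) (G : SimpleGraph V) (r : ℕ) (x : V) :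
    probEvent p (fun A0 => x ∈ bootSets G r A0 1)
      = p + (1 - p) * binTail p (G.neighborFinset x).card r := by
  set q := 1 - p with hq
  set S := G.neighborFinset x with hS
  have hxS : x ∉ S := SimpleGraph.notMem_neighborFinset_self G x
  set T : Finset V := insert x S with hT
  have hTcard : T.card = S.card + 1 := card_insert_of_notMem hxS
  have hST : S ⊆ T := subset_insert x S
  -- rewrite the event as depending only on A ∩ T
  have ev : ∀ A : Finset V, (x ∈ bootSets G r A 1) ↔ (x ∈ A ∩ T ∨ r ≤ (S ∩ (A ∩ T)).card) := by
    intro A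
    have e1 : x ∈ A ∩ T ↔ x ∈ A := by
      rw [mem_inter]
      exact ⟨fun h => h.1, fun h => ⟨h, mem_insert_self x S⟩⟩
    have e2 : S ∩ (A ∩ T) = S ∩ A := by
      ext a
      simp only [mem_inter]
      exact ⟨fun ⟨h1, h2, _⟩ => ⟨h1, h2⟩, fun ⟨h1, h2⟩ => ⟨h1, h2, hST h1⟩⟩
    rw [e1, e2]
    show x ∈ A ∪ Finset.univ.filter (fun v => r ≤ (G.neighborFinset v ∩ A).card) ↔ _
    simp only [mem_union, mem_filter, mem_univ, true_and]
    rfl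
  have ev2 : probEvent p (fun A0 => x ∈ bootSets G r A0 1)
      = probEvent p (fun A => (fun B => x ∈ B ∨ r ≤ (S ∩ B).card) (A ∩ T)) := by
    unfold probEvent
    apply Finset.sum_congr rfl
    intro A _
    congr 1
    simp only [eq_iff_iff]
    exact ev A
  rw [ev2, local_prob p T (fun B => x ∈ B ∨ r ≤ (S ∩ B).card)]
  rw [hT, Finset.sum_powerset_insert hxS]
  rw [← hq]
  beta_reduce
  have key : ∀ S1 S2 : ℝ, S1 = q * binTail p S.card r → S2 = p →
      S1 + S2 = p + q * binTail p S.card r := by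
    intro S1 S2 h1 h2; rw [h1, h2]; ring
  apply key
  · rw [← powerset_tail_eq p S r, Finset.mul_sum]
    apply Finset.sum_congr rfl
    intro B hB
    rw [mem_powerset] at hB
    have hxB : x ∉ B := fun h => hxS (hB h)
    have hSB : S ∩ B = B := inter_eq_right.mpr hB
    have hcond : (x ∈ B ∨ r ≤ (S ∩ B).card) ↔ r ≤ B.card := by
      rw [hSB]
      exact ⟨fun h => h.resolve_left hxB, fun h => Or.inr h⟩
    have hBcard : B.card ≤ S.card := card_le_card hB
    have epow : (insert x S).card - B.card = (S.card - B.card) + 1 := by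
      rw [card_insert_of_notMem hxS]; omega
    by_cases h : r ≤ B.card
    · rw [if_pos (hcond.mpr h), if_pos h, epow, pow_succ]
      ring
    · rw [if_neg (fun hc => h (hcond.mp hc)), if_neg h, mul_zero]
  · refine Eq.trans (Finset.sum_congr rfl
        (g := fun B => p * (p ^ B.card * q ^ (S.card - B.card))) ?_) ?_
    · intro B hB
      show _ = p * (p ^ B.card * q ^ (S.card - B.card))
      rw [mem_powerset] at hB
      have hxB : x ∉ B := fun h => hxS (hB h)
      rw [if_pos (Or.inl (mem_insert_self x B))]
      rw [card_insert_of_notMem hxB, card_insert_of_notMem hxS]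
      have hBcard : B.card ≤ S.card := card_le_card hB
      have e2 : S.card + 1 - (B.card + 1) = S.card - B.card := by omega
      rw [e2, pow_succ]
      ring
    · rw [← Finset.mul_sum, binom_powerset_sum, hq]
      norm_num

-- window bound: L copies of the smallest term
lemma binTail_ge_window (p : ℝ) (M r L : ℕ) (hL : 1 ≤ L) (hM : r + L ≤ M + 1)
    (hr : (M+1)/2 ≤ r) (hp0 : 0 ≤ p) (hp : p ≤ 1/2) :
    (L : ℝ) * ((M.choose (r+L-1) : ℝ) * p ^ (r+L-1) * (1-p) ^ (M - (r+L-1)))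
      ≤ binTail p M r := by
  have hq0 : (0:ℝ) ≤ 1 - p := by linarith
  have hpq : p ≤ 1 - p := by linarith
  set J := r + L - 1 with hJ
  have hJM : J ≤ M := by omega
  -- each term in the window is at least the J-term
  have hterm : ∀ j ∈ Finset.Icc r J,
      (M.choose J : ℝ) * p ^ J * (1-p) ^ (M - J)
        ≤ (M.choose j : ℕ) * p ^ j * (1-p) ^ (M - j) := by
    intro j hj
    rw [mem_Icc] at hj
    obtain ⟨hj1, hj2⟩ := hj
    have hcj : (M.choose J : ℝ) ≤ (M.choose j : ℝ) := by
      exact_mod_cast choose_anti M j J (le_trans hr hj1) hj2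
    have hpow : p ^ J * (1-p) ^ (M - J) ≤ p ^ j * (1-p) ^ (M - j) := by
      have e1 : p ^ J = p ^ j * p ^ (J - j) := by
        rw [← pow_add]; congr 1; omega
      have e2 : (1-p) ^ (M - j) = (1-p) ^ (J - j) * (1-p) ^ (M - J) := by
        rw [← pow_add]; congr 1; omega
      rw [e1, e2]
      have h3 : p ^ (J - j) ≤ (1-p) ^ (J - j) := pow_le_pow_left₀ hp0 hpq _
      calc p ^ j * p ^ (J-j) * (1-p) ^ (M-J)
          ≤ p ^ j * (1-p) ^ (J-j) * (1-p) ^ (M-J) := by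
            apply mul_le_mul_of_nonneg_right _ (pow_nonneg hq0 _)
            exact mul_le_mul_of_nonneg_left h3 (pow_nonneg hp0 _)
        _ = p ^ j * ((1-p) ^ (J-j) * (1-p) ^ (M-J)) := by ring
    calc (M.choose J : ℝ) * p ^ J * (1-p) ^ (M - J)
        = (M.choose J : ℝ) * (p ^ J * (1-p) ^ (M - J)) := by ring
      _ ≤ (M.choose j : ℝ) * (p ^ j * (1-p) ^ (M - j)) := by
          apply mul_le_mul hcj hpow
          · positivity
          · positivity
      _ = (M.choose j : ℝ) * p ^ j * (1-p) ^ (M - j) := by ring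
  have hsub : Finset.Icc r J ⊆ Finset.range (M+1) := by
    intro j hj
    rw [mem_Icc] at hj; rw [Finset.mem_range]; omega
  have hcard : (Finset.Icc r J).card = L := by
    rw [Nat.card_Icc]; omega
  calc (L : ℝ) * ((M.choose J : ℝ) * p ^ J * (1-p) ^ (M - J))
      = ∑ _j ∈ Finset.Icc r J, (M.choose J : ℝ) * p ^ J * (1-p) ^ (M - J) := by
        rw [Finset.sum_const, hcard, nsmul_eq_mul]
    _ ≤ ∑ j ∈ Finset.Icc r J, (M.choose j : ℝ) * p ^ j * (1-p) ^ (M - j) :=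
        Finset.sum_le_sum hterm
    _ = ∑ j ∈ Finset.Icc r J,
          (if r ≤ j then (M.choose j : ℝ) * p ^ j * (1-p) ^ (M - j) else 0) := by
        apply Finset.sum_congr rfl
        intro j hj
        rw [mem_Icc] at hj
        rw [if_pos hj.1]
    _ ≤ binTail p M r := by
        apply Finset.sum_le_sum_of_subset_of_nonneg hsub
        intro j _ _
        by_cases h : r ≤ j
        · rw [if_pos h]; positivity
        · rw [if_neg h]

end Helpers

set_option maxHeartbeats 2000000 in
/-- For a fixed integer `k ≥ 2`, with initial infection probability
`p = 1/2 - n^{-k/2}` and threshold `r = ⌈N/2⌉ + C(3k,2k)` (where `N = ∑_{i=1}^k C(n,i)`),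
there is an absolute constant `δ > 0` such that for all sufficiently large `n` and every
vertex `x` of `Q_{k,n}`, `P(x ∈ A_{1,r}) ≥ 1/2 + δ`. -/
theorem step_one_infection_prob_Qkn (k : ℕ) (hk : 2 ≤ k) :
    ∃ δ : ℝ, 0 < δ ∧ ∃ n₀ : ℕ, ∀ n ≥ n₀, ∀ x : Fin n → Bool,
      1 / 2 + δ ≤
        probEvent (1 / 2 - (n : ℝ) ^ (-(k : ℝ) / 2))
          (fun A0 => x ∈ bootSets (cubeGraph n k)
            (⌈((∑ i ∈ Finset.Icc 1 k, n.choose i : ℕ) : ℝ) / 2⌉₊ + (3 * k).choose (2 * k))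
            A0 1) := by
  classical
  set C := (3 * k).choose (2 * k) with hCdef
  have hC1 : 1 ≤ C := Nat.choose_pos (by omega)
  set Ek := Real.exp (-(8*(k:ℝ)) - 4*(2*(k:ℝ)+1)) with hEkdef
  have hEk0 : 0 < Ek := Real.exp_pos _
  refine ⟨Ek/256, by positivity, ?_⟩
  set B := min (1/8 : ℝ) (min (Ek/256) (1/(2*(C:ℝ)+2))) with hBdef
  have hB0 : 0 < B := by
    apply lt_min (by norm_num)
    apply lt_min (by positivity) (by positivity)
  refine ⟨max ((100*(C+2))^2) (⌈1/B⌉₊ + 2), ?_⟩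
  intro n hn x
  have hn1 : (100*(C+2))^2 ≤ n := le_trans (le_max_left _ _) hn
  have hn2 : ⌈1/B⌉₊ + 2 ≤ n := le_trans (le_max_right _ _) hn
  have hnpos : 0 < n := by omega
  have hnR0 : (0:ℝ) < n := by exact_mod_cast hnpos
  have hn1R : (1:ℝ) ≤ n := by exact_mod_cast hnpos
  -- epsilon facts
  set ε := (n:ℝ) ^ (-(k:ℝ) / 2) with hεdef
  have hε0 : 0 ≤ ε := Real.rpow_nonneg (Nat.cast_nonneg n) _
  have hεn : ε ≤ 1/n := by
    rw [hεdef]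
    have h1 : (n:ℝ) ^ (-(k:ℝ)/2) ≤ (n:ℝ) ^ (-1:ℝ) := by
      apply Real.rpow_le_rpow_of_exponent_le hn1R
      have : (2:ℝ) ≤ k := by exact_mod_cast hk
      linarith
    rw [Real.rpow_neg_one] at h1
    rw [one_div]; exact h1
  have hεB : ε ≤ B := by
    have h2 : (1:ℝ)/B ≤ ⌈1/B⌉₊ := Nat.le_ceil _
    have h3 : ((⌈1/B⌉₊ : ℕ) : ℝ) ≤ n := by exact_mod_cast (by omega : ⌈1/B⌉₊ ≤ n)
    have h4 : 1/B ≤ n := le_trans h2 h3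
    rw [div_le_iff₀ hB0] at h4
    refine le_trans hεn ?_
    rw [div_le_iff₀ hnR0]
    linarith [mul_comm B (n:ℝ)]
  have hε8 : ε ≤ 1/8 := le_trans hεB (min_le_left _ _)
  have hεEk : ε ≤ Ek/256 := le_trans hεB (le_trans (min_le_right _ _) (min_le_left _ _))
  have hεC : ε ≤ 1/(2*(C:ℝ)+2) := le_trans hεB (le_trans (min_le_right _ _) (min_le_right _ _))
  have hεC2 : ε * (2*(C:ℝ)+2) ≤ 1 := by
    rw [le_div_iff₀ (by positivity : (0:ℝ) < 2*(C:ℝ)+2)] at hεC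
    linarith
  -- N and M
  set N := ∑ i ∈ Finset.Icc 1 k, n.choose i with hNdef
  have hdeg : ((cubeGraph n k).neighborFinset x).card = N := degree_eq n k x
  have hMn : n ≤ N := by
    rw [hNdef]
    calc n = n.choose 1 := (Nat.choose_one_right n).symm
      _ ≤ ∑ i ∈ Finset.Icc 1 k, n.choose i :=
        Finset.single_le_sum (fun i _ => Nat.zero_le _) (by rw [Finset.mem_Icc]; omega)
  have hn2' : 2 ≤ n := by
    have h200 : 200 ≤ 100*(C+2) := by omega
    have := Nat.pow_le_pow_left h200 2
    omega
  have hN2 : 2 ≤ N := by omega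
  -- sqrt facts
  set a := Nat.sqrt N with hadef
  have h100 : 100*(C+2) ≤ a := by
    have hsq : (100*(C+2))^2 ≤ N := by omega
    have h := Nat.sqrt_le_sqrt hsq
    have e : Nat.sqrt ((100*(C+2))^2) = 100*(C+2) := by
      rw [pow_two, Nat.sqrt_eq]
    rw [e] at h
    exact h
  have haa : a*a ≤ N := by
    have := Nat.sqrt_le' N
    rw [pow_two] at this
    exact this
  have h200a : 200*a ≤ N := by
    calc 200*a ≤ a*a := Nat.mul_le_mul_right a (by omega)
      _ ≤ N := haa
  set L := a/8 + 1 with hLdef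
  set c := (N+1)/2 with hcdef
  set s := C + a/8 with hsdef
  have hsL : s = C + L - 1 := by omega
  have hs1 : 1 ≤ s := by omega
  have h4a : 4*(C + a/8 + 1) ≤ a := by omega
  have hsM : 16*s*(s+1) ≤ N := by
    have h44 : 4*(s+1) ≤ a := by omega
    calc 16*s*(s+1) ≤ 16*(s+1)*(s+1) := by
          apply Nat.mul_le_mul_right
          omega
      _ = (4*(s+1))*(4*(s+1)) := by ring
      _ ≤ a*a := Nat.mul_le_mul h44 h44
      _ ≤ N := haa
  have hcs : c + s ≤ N := by omega
  -- the epsilon-power facts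
  have hε2 : ε^2 = (n:ℝ)^(-(k:ℝ)) := by
    rw [hεdef, ← Real.rpow_natCast ((n:ℝ)^(-(k:ℝ)/2)) 2,
      ← Real.rpow_mul (Nat.cast_nonneg n)]
    congr 1
    push_cast
    ring
  have hMk : (N:ℝ) ≤ (k:ℝ) * (n:ℝ)^(k:ℕ) := by
    have hN : N ≤ k * n^k := by
      rw [hNdef]
      calc ∑ i ∈ Finset.Icc 1 k, n.choose i ≤ ∑ _i ∈ Finset.Icc 1 k, n^k := by
            apply Finset.sum_le_sum
            intro i hi
            rw [Finset.mem_Icc] at hi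
            exact le_trans (Nat.choose_le_pow n i)
              (Nat.pow_le_pow_right (by omega) hi.2)
        _ = k * n^k := by
            rw [Finset.sum_const, Nat.card_Icc]
            simp [smul_eq_mul]
    exact_mod_cast hN
  have hkR1 : (1:ℝ) ≤ k := by exact_mod_cast (by omega : 1 ≤ k)
  have ha : ε^2 * (N:ℝ) ≤ (k:ℝ) := by
    calc ε^2 * (N:ℝ) ≤ ε^2 * ((k:ℝ) * (n:ℝ)^(k:ℕ)) :=
          mul_le_mul_of_nonneg_left hMk (sq_nonneg ε)
      _ = (k:ℝ) * (ε^2 * (n:ℝ)^(k:ℕ)) := by ring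
      _ = (k:ℝ) := by
          rw [hε2, ← Real.rpow_natCast (n:ℝ) k, ← Real.rpow_add hnR0]
          simp
  have hεL : ε * (L:ℝ) ≤ (k:ℝ) := by
    have hLa : L ≤ a := by omega
    have hL2N : (L:ℝ)^2 ≤ (N:ℝ) := by
      have : L*L ≤ N := le_trans (Nat.mul_le_mul hLa hLa) haa
      have h := this
      rw [← pow_two] at h
      exact_mod_cast h
    have h1 : (ε*(L:ℝ))^2 ≤ (k:ℝ) := by
      calc (ε*(L:ℝ))^2 = ε^2 * (L:ℝ)^2 := by ring
        _ ≤ ε^2 * (N:ℝ) := mul_le_mul_of_nonneg_left hL2N (sq_nonneg ε)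
        _ ≤ (k:ℝ) := ha
    have h2 : 0 ≤ ε*(L:ℝ) := by positivity
    nlinarith
  have hb : ε * (2*(s:ℝ)+1) ≤ 2*(k:ℝ)+1 := by
    have hs2 : (s:ℝ) ≤ (C:ℝ) + (L:ℝ) := by
      have : s ≤ C + L := by omega
      exact_mod_cast this
    have e1 : ε * (2*(s:ℝ)+1) ≤ ε * ((2*(C:ℝ)+2) + 2*(L:ℝ)) := by
      apply mul_le_mul_of_nonneg_left _ hε0
      linarith
    calc ε * (2*(s:ℝ)+1) ≤ ε * ((2*(C:ℝ)+2) + 2*(L:ℝ)) := e1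
      _ = ε * (2*(C:ℝ)+2) + 2*(ε*(L:ℝ)) := by ring
      _ ≤ 1 + 2*(k:ℝ) := by linarith
      _ = 2*(k:ℝ)+1 := by ring
  -- rewrite goal
  rw [vertex_prob, hdeg, ceil_half N]
  -- binomial tail lower bound
  have hp0 : (0:ℝ) ≤ 1/2 - ε := by linarith
  have hp12 : (1:ℝ)/2 - ε ≤ 1/2 := by linarith
  have hwin := binTail_ge_window (1/2 - ε) N (c + C) L (by omega)
    (by omega) (by omega) hp0 hp12
  have hJeq : c + C + L - 1 = c + s := by omega
  rw [hJeq] at hwin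
  have e1p : (1:ℝ) - (1/2 - ε) = 1/2 + ε := by ring
  rw [e1p] at hwin
  have hterm := term_lb N c s (c+s) ε (k:ℝ) (2*(k:ℝ)+1)
    (by omega) (by omega) rfl hs1 hsM hcs hε0 hε8
    (by positivity) (by positivity) ha hb
  have hX := X_lb N c L hN2 hcdef (L_lb N)
  have hbt : Ek/64 ≤ binTail (1/2 - ε) N (c + C) := by
    have hLR0 : (0:ℝ) ≤ (L:ℝ) := Nat.cast_nonneg _
    calc Ek/64 = (1/2*Ek) * (1/32) := by ring
      _ ≤ (1/2*Ek) * ((L:ℝ) * (N.choose c : ℝ) * (1/2)^N) :=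
          mul_le_mul_of_nonneg_left hX (by positivity)
      _ = (L:ℝ) * ((1/2) * (N.choose c : ℝ) * (1/2)^N * Ek) := by ring
      _ ≤ (L:ℝ) * ((N.choose (c+s) : ℝ) * (1/2 - ε)^(c+s) * (1/2 + ε)^(N-(c+s))) := by
          apply mul_le_mul_of_nonneg_left _ hLR0
          exact hterm
      _ ≤ binTail (1/2 - ε) N (c + C) := by
          have e2 : (N.choose (c+s) : ℝ) * (1/2 - ε)^(c+s) * (1/2 + ε)^(N-(c+s))
              = (N.choose (c+s) : ℝ) * (1/2 - ε)^(c+s) * (1/2 + ε)^(N-(c+s)) := rfl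
          exact hwin
  -- conclude
  have hfin : (1:ℝ)/2 * (Ek/64) ≤ (1 - (1/2 - ε)) * binTail (1/2 - ε) N (c + C) := by
    rw [e1p]
    apply mul_le_mul (by linarith) hbt (by positivity) (by linarith)
  linarith

end
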